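/- If A(ε) has a Laurent (h_A, k_A)-expansion and B(ε) has a pivotal Laurent (h_B, k_B)-expansion, then there exists 0 < ε'₀ ≤ ε₀ such that B(ε) ≠ 0 on (0, ε'₀], and the quotient A(ε)/B(ε) has a Laurent (h_D, k_D)-expansion with h_D = h_A - h_B and k_D = min(k_A - h_B, h_A + k_B - 2h_B), whose coefficients satisfy the recursion d_{h_D + r} = (1/b_{h_B})(a_{h_A + r} - Σ_{1 ≤ i ≤ r} b_{h_B + i} d_{h_D + r - i}). -/

import Mathlib

open Filter Set

lemma tendsto_zpow_pos' (n : ℤ) (hn : 1 ≤ n) :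
    Tendsto (fun ε : ℝ => ε ^ n) (nhdsWithin 0 (Set.Ioi 0)) (nhds 0) := by
  have h : ∀ ε : ℝ, ε ^ n = ε ^ n.toNat := by
    intro ε
    rw [← zpow_natCast]
    congr 1
    omega
  simp only [h]
  have : Tendsto (fun ε : ℝ => ε ^ n.toNat) (nhds 0) (nhds ((0:ℝ) ^ n.toNat)) :=
    (continuous_pow n.toNat).tendsto 0
  rw [zero_pow (by omega)] at this
  exact this.mono_left nhdsWithin_le_nhds

lemma tendsto_sum_gen {α : Type*} (s : Finset α) (c : α → ℝ) (e : α → ℤ) (t : ℤ)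
    (h : ∀ x ∈ s, t ≤ e x) :
    Tendsto (fun ε : ℝ => (∑ x ∈ s, c x * ε ^ (e x)) / ε ^ t)
      (nhdsWithin 0 (Set.Ioi 0)) (nhds (∑ x ∈ s, if e x = t then c x else 0)) := by
  have heq : ∀ᶠ ε : ℝ in nhdsWithin 0 (Set.Ioi 0),
      (∑ x ∈ s, c x * ε ^ (e x)) / ε ^ t = ∑ x ∈ s, c x * ε ^ (e x - t) := by
    filter_upwards [self_mem_nhdsWithin] with ε (hε : ε ∈ Set.Ioi (0:ℝ))
    have hε0 : ε ≠ 0 := ne_of_gt hε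
    rw [Finset.sum_div]
    refine Finset.sum_congr rfl fun x hx => ?_
    rw [zpow_sub₀ hε0, mul_div_assoc]
  refine Tendsto.congr' (by filter_upwards [heq] with ε h using h.symm) ?_
  refine tendsto_finset_sum _ fun x hx => ?_
  by_cases hxt : e x = t
  · simp only [hxt, sub_self, zpow_zero, mul_one, if_pos]
    exact tendsto_const_nhds
  · rw [if_neg hxt]
    have : (1:ℤ) ≤ e x - t := by have := h x hx; omega
    have := (tendsto_zpow_pos' _ this).const_mul (c x)
    simpa using this


noncomputable def dAux (a b : ℤ → ℝ) (hA hB : ℤ) : ℕ → ℝ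
  | r => (1 / b hB) * (a (hA + r) -
      ∑ i ∈ (Finset.range r).attach, b (hB + (i : ℕ) + 1) * dAux a b hA hB (r - 1 - (i : ℕ)))
  termination_by r => r
  decreasing_by
    have := Finset.mem_range.mp i.2; omega

lemma dAux_eq (a b : ℤ → ℝ) (hA hB : ℤ) (r : ℕ) :
    dAux a b hA hB r = (1 / b hB) * (a (hA + r) -
      ∑ j ∈ Finset.range r, b (hB + j + 1) * dAux a b hA hB (r - 1 - j)) := by
  rw [dAux]
  congr 2
  exact Finset.sum_attach (Finset.range r) (fun j => b (hB + (j:ℤ) + 1) * dAux a b hA hB (r - 1 - j))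

noncomputable def dFun (a b : ℤ → ℝ) (hA hB : ℤ) : ℤ → ℝ := fun n =>
  if hA - hB ≤ n then dAux a b hA hB (n - (hA - hB)).toNat else 0

lemma dFun_rec (a b : ℤ → ℝ) (hA hB : ℤ) (r : ℤ) (hr : 0 ≤ r) :
    dFun a b hA hB (hA - hB + r) = (1 / b hB) *
      (a (hA + r) - ∑ i ∈ Finset.Icc (1:ℤ) r, b (hB + i) * dFun a b hA hB (hA - hB + r - i)) := by
  rw [dFun, if_pos (by omega)]
  have hrt : (hA - hB + r - (hA - hB)).toNat = r.toNat := by omega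
  rw [hrt, dAux_eq]
  have h1 : (hA + (r.toNat : ℤ)) = hA + r := by omega
  rw [h1]
  congr 2
  refine Finset.sum_nbij' (fun j => (j:ℤ) + 1) (fun i => (i - 1).toNat) ?_ ?_ ?_ ?_ ?_
  · intro j hj
    have := Finset.mem_range.mp hj
    simp only [Finset.mem_Icc]; omega
  · intro i hi
    have := Finset.mem_Icc.mp hi
    simp only [Finset.mem_range]; omega
  · intro j hj; have := Finset.mem_range.mp hj; omega
  · intro i hi; have := Finset.mem_Icc.mp hi; omega
  · intro j hj
    have hj' := Finset.mem_range.mp hj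
    have e1 : hB + ((j:ℤ) + 1) = hB + j + 1 := by ring
    rw [e1]
    congr 1
    rw [dFun, if_pos (by omega)]
    congr 1
    omega

lemma key_identity (a b : ℤ → ℝ) (hA kA hB kB hD kD : ℤ)
    (hbp : b hB ≠ 0)
    (hhD : hD = hA - hB) (hDk : hD ≤ kD) (hk1 : kD - hD ≤ kA - hA) (hk2 : kD - hD ≤ kB - hB)
    (ε : ℝ) (hε : ε ≠ 0) :
    (∑ n ∈ Finset.Icc hA kA, a n * ε ^ n) -
      (∑ l ∈ Finset.Icc hD kD, dFun a b hA hB l * ε ^ l) *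
        (∑ m ∈ Finset.Icc hB kB, b m * ε ^ m)
    = (∑ n ∈ Finset.Icc (kD + hB + 1) kA, a n * ε ^ n) -
      ∑ p ∈ (Finset.Icc hD kD ×ˢ Finset.Icc hB kB).filter
          (fun p => kD + hB + 1 ≤ p.1 + p.2),
        dFun a b hA hB p.1 * b p.2 * ε ^ (p.1 + p.2) := by
  set d := dFun a b hA hB with hd
  have hprod : (∑ l ∈ Finset.Icc hD kD, d l * ε ^ l) * (∑ m ∈ Finset.Icc hB kB, b m * ε ^ m)
      = ∑ p ∈ Finset.Icc hD kD ×ˢ Finset.Icc hB kB, d p.1 * b p.2 * ε ^ (p.1 + p.2) := by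
    rw [Finset.sum_mul_sum]
    rw [Finset.sum_product]
    refine Finset.sum_congr rfl fun l _ => Finset.sum_congr rfl fun m _ => ?_
    rw [zpow_add₀ hε]; ring
  rw [hprod]
  -- split the product sum
  rw [← Finset.sum_filter_add_sum_filter_not (Finset.Icc hD kD ×ˢ Finset.Icc hB kB)
    (fun p => kD + hB + 1 ≤ p.1 + p.2)]
  -- split SA
  have hsplit : Finset.Icc hA kA = Finset.Icc hA (kD + hB) ∪ Finset.Icc (kD + hB + 1) kA := by
    ext n; simp only [Finset.mem_union, Finset.mem_Icc]; omega
  have hdisj : Disjoint (Finset.Icc hA (kD + hB)) (Finset.Icc (kD + hB + 1) kA) := by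
    rw [Finset.disjoint_left]; intro n hn hn'
    simp only [Finset.mem_Icc] at hn hn'; omega
  rw [hsplit, Finset.sum_union hdisj]
  have hkey : ∑ n ∈ Finset.Icc hA (kD + hB), a n * ε ^ n
      = ∑ p ∈ (Finset.Icc hD kD ×ˢ Finset.Icc hB kB).filter
          (fun p => ¬ (kD + hB + 1 ≤ p.1 + p.2)),
        d p.1 * b p.2 * ε ^ (p.1 + p.2) := by
    have hmaps : ∀ p ∈ (Finset.Icc hD kD ×ˢ Finset.Icc hB kB).filter
        (fun p => ¬ (kD + hB + 1 ≤ p.1 + p.2)), p.1 + p.2 ∈ Finset.Icc hA (kD + hB) := by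
      intro p hp
      simp only [Finset.mem_filter, Finset.mem_product, Finset.mem_Icc] at hp
      simp only [Finset.mem_Icc]; omega
    rw [← Finset.sum_fiberwise_of_maps_to hmaps
      (fun p : ℤ × ℤ => d p.1 * b p.2 * ε ^ (p.1 + p.2))]
    refine Finset.sum_congr rfl fun n hn => ?_
    have hn' := Finset.mem_Icc.mp hn
    set r : ℤ := n - hA with hr
    have hr0 : 0 ≤ r := by omega
    have hfib : ∀ p : ℤ × ℤ, (p ∈ ((Finset.Icc hD kD ×ˢ Finset.Icc hB kB).filter
          (fun p => ¬ (kD + hB + 1 ≤ p.1 + p.2))).filter (fun p => p.1 + p.2 = n))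
        ↔ (p.1 + p.2 = n ∧ hD ≤ p.1 ∧ p.1 ≤ kD ∧ hB ≤ p.2 ∧ p.2 ≤ kB) := by
      intro p
      simp only [Finset.mem_filter, Finset.mem_product, Finset.mem_Icc]
      constructor
      · rintro ⟨⟨⟨⟨h1, h2⟩, h3, h4⟩, h5⟩, h6⟩; exact ⟨h6, h1, h2, h3, h4⟩
      · rintro ⟨h6, h1, h2, h3, h4⟩; exact ⟨⟨⟨⟨h1, h2⟩, h3, h4⟩, by omega⟩, h6⟩
    have hbij : ∑ p ∈ ((Finset.Icc hD kD ×ˢ Finset.Icc hB kB).filter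
          (fun p => ¬ (kD + hB + 1 ≤ p.1 + p.2))).filter (fun p => p.1 + p.2 = n),
          d p.1 * b p.2 * ε ^ (p.1 + p.2)
        = ∑ i ∈ Finset.Icc (0:ℤ) r, d (hD + r - i) * b (hB + i) * ε ^ n := by
      refine Finset.sum_nbij' (fun p => p.2 - hB) (fun i => (hD + r - i, hB + i)) ?_ ?_ ?_ ?_ ?_
      · intro p hp; rw [hfib] at hp; simp only [Finset.mem_Icc]; omega
      · intro i hi; have := Finset.mem_Icc.mp hi; rw [hfib]; dsimp only; omega
      · intro p hp; rw [hfib] at hp; have := hp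
        ext <;> dsimp <;> omega
      · intro i hi; dsimp only; omega
      · intro p hp; rw [hfib] at hp
        have : p.1 + p.2 = n := hp.1
        rw [this]
        have e1 : p.1 = hD + r - (p.2 - hB) := by omega
        have e2 : p.2 = hB + (p.2 - hB) := by omega
        rw [← e1, ← e2]
    rw [hbij]
    rw [← Finset.sum_mul]
    have hinner : ∑ i ∈ Finset.Icc (0:ℤ) r, d (hD + r - i) * b (hB + i) = a n := by
      have h0 : Finset.Icc (0:ℤ) r = insert 0 (Finset.Icc 1 r) := by
        ext i; simp only [Finset.mem_insert, Finset.mem_Icc]; omega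
      rw [h0, Finset.sum_insert (by simp only [Finset.mem_Icc]; omega)]
      have hrec := dFun_rec a b hA hB r hr0
      rw [hhD] at *
      have hdr : d (hA - hB + r) * b hB
          = a (hA + r) - ∑ i ∈ Finset.Icc (1:ℤ) r, b (hB + i) * d (hA - hB + r - i) := by
        rw [hd, hrec]; field_simp
      have e0 : hA - hB + r - 0 = hA - hB + r := by ring
      have e00 : hB + (0:ℤ) = hB := by ring
      rw [e0, e00, hdr]
      have e3 : ∑ i ∈ Finset.Icc (1:ℤ) r, d (hA - hB + r - i) * b (hB + i)
          = ∑ i ∈ Finset.Icc (1:ℤ) r, b (hB + i) * d (hA - hB + r - i) := by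
        refine Finset.sum_congr rfl fun i _ => by ring
      rw [e3]
      have : hA + r = n := by omega
      rw [this]; ring
    rw [hinner]
  rw [hkey]
  ring

lemma tendsto_zpow_nonneg' (n : ℤ) (hn : 0 ≤ n) :
    ∃ L : ℝ, Tendsto (fun ε : ℝ => ε ^ n) (nhdsWithin 0 (Set.Ioi 0)) (nhds L) := by
  rcases eq_or_lt_of_le hn with h | h
  · exact ⟨1, by simp [← h, tendsto_const_nhds]⟩
  · exact ⟨0, tendsto_zpow_pos' n (by omega)⟩

/-- A Laurent `(h,k)`-asymptotic expansion of `A` at `0⁺`: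
`(A ε - ∑_{l=h}^{k} a_l ε^l)/ε^k → 0` as `ε → 0⁺`. -/
def IsLaurentExpansion (A : ℝ → ℝ) (h k : ℤ) (a : ℤ → ℝ) : Prop :=
  h ≤ k ∧
    Tendsto (fun ε : ℝ => (A ε - ∑ l ∈ Finset.Icc h k, a l * ε ^ l) / ε ^ k)
      (nhdsWithin 0 (Set.Ioi 0)) (nhds 0)


/-- Division rule for Laurent asymptotic expansions (pivotal divisor). -/
theorem laurent_expansion_div (ε₀ : ℝ) (hε₀ : 0 < ε₀) (A B : ℝ → ℝ) (hA kA hB kB : ℤ)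
    (a b : ℤ → ℝ)
    (h1 : IsLaurentExpansion A hA kA a) (h2 : IsLaurentExpansion B hB kB b) (hp : b hB ≠ 0) :
    ∃ ε₀' : ℝ, 0 < ε₀' ∧ ε₀' ≤ ε₀ ∧ (∀ ε ∈ Set.Ioc (0:ℝ) ε₀', B ε ≠ 0) ∧
      ∃ d : ℤ → ℝ,
        IsLaurentExpansion (fun ε => A ε / B ε) (hA - hB) (min (kA - hB) (hA + kB - 2 * hB)) d ∧
        ∀ r ∈ Finset.Icc (0:ℤ) (min (kA - hB) (hA + kB - 2 * hB) - (hA - hB)),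
          d (hA - hB + r)
            = (1 / b hB) *
                (a (hA + r) - ∑ i ∈ Finset.Icc (1:ℤ) r, b (hB + i) * d (hA - hB + r - i)) := by
  obtain ⟨hAk, hAt⟩ := h1
  obtain ⟨hBk, hBt⟩ := h2
  set hD : ℤ := hA - hB with hhD
  set kD : ℤ := min (kA - hB) (hA + kB - 2 * hB) with hkD
  have hDk : hD ≤ kD := by omega
  have hk1 : kD - hD ≤ kA - hA := by omega
  have hk2 : kD - hD ≤ kB - hB := by omega
  set d : ℤ → ℝ := dFun a b hA hB with hd
  set SA : ℝ → ℝ := fun ε => ∑ l ∈ Finset.Icc hA kA, a l * ε ^ l with hSA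
  set SB : ℝ → ℝ := fun ε => ∑ l ∈ Finset.Icc hB kB, b l * ε ^ l with hSB
  set SD : ℝ → ℝ := fun ε => ∑ l ∈ Finset.Icc hD kD, d l * ε ^ l with hSD
  have hεpos : ∀ᶠ ε : ℝ in nhdsWithin 0 (Set.Ioi 0), 0 < ε := self_mem_nhdsWithin
  -- B ε / ε ^ hB → b hB
  have hBlim : Tendsto (fun ε : ℝ => B ε / ε ^ hB) (nhdsWithin 0 (Set.Ioi 0)) (nhds (b hB)) := by
    obtain ⟨L2, hL2⟩ := tendsto_zpow_nonneg' (kB - hB) (by omega)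
    have t3 := tendsto_sum_gen (Finset.Icc hB kB) b id hB (fun l hl => (Finset.mem_Icc.mp hl).1)
    simp only [id_eq] at t3
    have hsum : (∑ l ∈ Finset.Icc hB kB, if l = hB then b l else 0) = b hB := by
      rw [Finset.sum_ite_eq' (Finset.Icc hB kB) hB b]
      simp [Finset.mem_Icc, hBk]
    rw [hsum] at t3
    have comb := (hBt.mul hL2).add t3
    rw [zero_mul, zero_add] at comb
    refine comb.congr' ?_
    filter_upwards [hεpos] with ε hε
    have hε0 : ε ≠ 0 := ne_of_gt hε
    have h1' : (ε:ℝ) ^ kB ≠ 0 := zpow_ne_zero _ hε0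
    have h2' : (ε:ℝ) ^ hB ≠ 0 := zpow_ne_zero _ hε0
    rw [zpow_sub₀ hε0]
    field_simp
    ring
  -- eventual nonvanishing of B
  have hBne : ∀ᶠ ε : ℝ in nhdsWithin 0 (Set.Ioi 0), B ε ≠ 0 := by
    filter_upwards [hBlim.eventually_ne hp] with ε hε hB0
    exact hε (by rw [hB0]; simp)
  -- choose ε₀'
  obtain ⟨u, hu, husub⟩ := mem_nhdsGT_iff_exists_Ioc_subset.mp hBne
  refine ⟨min ε₀ u, lt_min hε₀ hu, min_le_left _ _, ?_, d, ⟨hDk, ?_⟩, ?_⟩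
  · intro ε hε
    exact husub ⟨hε.1, le_trans hε.2 (min_le_right _ _)⟩
  · -- the main tendsto
    -- inverse limit
    have hInv : Tendsto (fun ε : ℝ => ε ^ hB / B ε) (nhdsWithin 0 (Set.Ioi 0))
        (nhds (1 / b hB)) := by
      have := hBlim.inv₀ hp
      simp only [one_div]
      refine this.congr fun ε => ?_
      rw [inv_div]
    -- G limit
    have hG : Tendsto (fun ε : ℝ => (A ε - SD ε * B ε) / ε ^ (kD + hB))
        (nhdsWithin 0 (Set.Ioi 0)) (nhds 0) := by
      obtain ⟨L1, hL1⟩ := tendsto_zpow_nonneg' (kA - (kD + hB)) (by omega)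
      obtain ⟨L3, hL3⟩ := tendsto_zpow_nonneg' (hD + kB - (kD + hB)) (by omega)
      -- T2 : (SA - SD * SB)/ε^(kD+hB) → 0
      have hT2 : Tendsto (fun ε : ℝ => (SA ε - SD ε * SB ε) / ε ^ (kD + hB))
          (nhdsWithin 0 (Set.Ioi 0)) (nhds 0) := by
        have ha1 := tendsto_sum_gen (Finset.Icc (kD + hB + 1) kA) a id (kD + hB)
          (fun l hl => by have := (Finset.mem_Icc.mp hl).1; simp only [id_eq]; omega)
        simp only [id_eq] at ha1
        have ha2 := tendsto_sum_gen
          ((Finset.Icc hD kD ×ˢ Finset.Icc hB kB).filter (fun p => kD + hB + 1 ≤ p.1 + p.2))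
          (fun p : ℤ × ℤ => d p.1 * b p.2) (fun p : ℤ × ℤ => p.1 + p.2) (kD + hB)
          (fun p hp => by have := (Finset.mem_filter.mp hp).2; omega)
        have hz1 : (∑ l ∈ Finset.Icc (kD + hB + 1) kA, if l = kD + hB then a l else 0)
            = 0 := by
          refine Finset.sum_eq_zero fun l hl => ?_
          have := (Finset.mem_Icc.mp hl).1
          rw [if_neg (by omega)]
        have hz2 : (∑ p ∈ (Finset.Icc hD kD ×ˢ Finset.Icc hB kB).filter
              (fun p => kD + hB + 1 ≤ p.1 + p.2),
            if p.1 + p.2 = kD + hB then d p.1 * b p.2 else 0) = 0 := by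
          refine Finset.sum_eq_zero fun p hp => ?_
          have := (Finset.mem_filter.mp hp).2
          rw [if_neg (by omega)]
        rw [hz1] at ha1
        rw [hz2] at ha2
        have comb := ha1.sub ha2
        rw [sub_zero] at comb
        refine comb.congr' ?_
        filter_upwards [hεpos] with ε hε
        have hε0 : ε ≠ 0 := ne_of_gt hε
        have hid := key_identity a b hA kA hB kB hD kD hp hhD hDk hk1 hk2 ε hε0
        rw [hSA, hSB, hSD, hd]
        dsimp only
        rw [hid, sub_div]
      -- assemble
      have hT1 := hAt.mul hL1
      rw [zero_mul] at hT1
      obtain ⟨LD, hLD⟩ : ∃ L : ℝ, Tendsto (fun ε : ℝ => SD ε / ε ^ hD)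
          (nhdsWithin 0 (Set.Ioi 0)) (nhds L) := by
        refine ⟨_, tendsto_sum_gen (Finset.Icc hD kD) d id hD
          (fun l hl => (Finset.mem_Icc.mp hl).1)⟩
      have hT3 := (hLD.mul hBt).mul hL3
      rw [mul_zero, zero_mul] at hT3
      have comb := (hT1.add hT2).sub hT3
      rw [add_zero, sub_zero] at comb
      refine comb.congr' ?_
      filter_upwards [hεpos] with ε hε
      have hε0 : ε ≠ 0 := ne_of_gt hε
      have e1 : (ε:ℝ) ^ kA ≠ 0 := zpow_ne_zero _ hε0
      have e2 : (ε:ℝ) ^ kB ≠ 0 := zpow_ne_zero _ hε0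
      have e3 : (ε:ℝ) ^ hD ≠ 0 := zpow_ne_zero _ hε0
      have e4 : (ε:ℝ) ^ (kD + hB) ≠ 0 := zpow_ne_zero _ hε0
      rw [zpow_sub₀ hε0 kA (kD + hB), zpow_sub₀ hε0 (hD + kB) (kD + hB), zpow_add₀ hε0 hD kB]
      field_simp
      ring
    -- final
    have comb := hG.mul hInv
    rw [zero_mul] at comb
    refine comb.congr' ?_
    filter_upwards [hεpos, hBne] with ε hε hBε
    have hε0 : ε ≠ 0 := ne_of_gt hε
    have e4 : (ε:ℝ) ^ (kD + hB) ≠ 0 := zpow_ne_zero _ hε0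
    have e5 : (ε:ℝ) ^ hB ≠ 0 := zpow_ne_zero _ hε0
    have e6 : (ε:ℝ) ^ kD ≠ 0 := zpow_ne_zero _ hε0
    rw [zpow_add₀ hε0 kD hB]
    field_simp
    ring
  · intro r hr
    have hr0 : 0 ≤ r := (Finset.mem_Icc.mp hr).1
    exact dFun_rec a b hA hB r hr0
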